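/- For fixed natural numbers j ≤ k, the function f(u) = t(3^{k-j}·(3u+2) − 1), where t is the Thue–Morse word, is not eventually constant in u. -/

import Mathlib

open Fin.NatCast

/-- The Thue–Morse word: bit `n` is the parity of the number of 1s in the
binary expansion of `n`. -/
def tm (n : ℕ) : Fin 2 := ((Nat.digits 2 n).sum : Fin 2)

lemma tm_step (n : ℕ) (hn : n ≠ 0) : tm n = ((n % 2 : ℕ) : Fin 2) + tm (n / 2) := by
  unfold tm
  rw [Nat.digits_def' (by norm_num : 1 < 2) (Nat.pos_of_ne_zero hn)]
  push_cast [List.sum_cons]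
  ring

lemma tm_two_mul (n : ℕ) : tm (2 * n) = tm n := by
  rcases Nat.eq_zero_or_pos n with h | h
  · simp [h]
  · rw [tm_step (2 * n) (by omega)]
    have h1 : (2 * n) % 2 = 0 := by omega
    have h2 : (2 * n) / 2 = n := by omega
    rw [h1, h2]
    simp

lemma tm_two_mul_add_one (n : ℕ) : tm (2 * n + 1) = tm n + 1 := by
  rw [tm_step (2 * n + 1) (by omega)]
  have h1 : (2 * n + 1) % 2 = 1 := by omega
  have h2 : (2 * n + 1) / 2 = n := by omega
  rw [h1, h2]
  push_cast
  abel

lemma tm_pow_mul_add (a x : ℕ) : ∀ y, y < 2 ^ a → tm (2 ^ a * x + y) = tm x + tm y := by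
  induction a generalizing x with
  | zero =>
    intro y hy
    interval_cases y
    simp [tm]
  | succ a ih =>
    intro y hy
    have hy2 : y / 2 < 2 ^ a := by
      have : (2:ℕ) ^ (a+1) = 2 * 2 ^ a := by ring
      omega
    rcases Nat.even_or_odd y with ⟨z, hz⟩ | ⟨z, hz⟩
    · have hn : 2 ^ (a+1) * x + y = 2 * (2 ^ a * x + z) := by ring_nf; omega
      have hyz : tm y = tm z := by
        have : y = 2 * z := by omega
        rw [this, tm_two_mul]
      rw [hn, tm_two_mul, ih x z (by omega), hyz]
    · have hn : 2 ^ (a+1) * x + y = 2 * (2 ^ a * x + z) + 1 := by ring_nf; omega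
      have hyz : tm y = tm z + 1 := by
        rw [hz, tm_two_mul_add_one]
      rw [hn, tm_two_mul_add_one, ih x z (by omega), hyz]
      abel

/-- Sum of `c` distinct powers of two with exponents `s*(t+i)`. -/
def gSum (s t c : ℕ) : ℕ := ∑ i ∈ Finset.range c, 2 ^ (s * (t + i))

lemma gSum_succ (s t c : ℕ) : gSum s t (c + 1) = 2 ^ (s * (t + c)) + gSum s t c := by
  rw [gSum, Finset.sum_range_succ, add_comm]
  rfl

lemma gSum_lt (s t : ℕ) (hs : 1 ≤ s) : ∀ c, gSum s t c < 2 ^ (s * (t + c)) := by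
  intro c
  induction c with
  | zero => simp [gSum]
  | succ c ih =>
    rw [gSum_succ]
    have h1 : s * (t + c) + 1 ≤ s * (t + (c + 1)) := by nlinarith
    calc 2 ^ (s * (t + c)) + gSum s t c < 2 ^ (s * (t + c)) + 2 ^ (s * (t + c)) := by omega
      _ = 2 ^ (s * (t + c) + 1) := by ring
      _ ≤ 2 ^ (s * (t + (c + 1))) := Nat.pow_le_pow_right (by norm_num) h1

lemma tm_one : tm 1 = 1 := by
  rw [tm_step 1 one_ne_zero]
  norm_num [tm]

lemma tm_gSum (s t : ℕ) (hs : 1 ≤ s) : ∀ c, tm (gSum s t c) = (c : Fin 2) := by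
  intro c
  induction c with
  | zero => simp [gSum, tm]
  | succ c ih =>
    have h : gSum s t (c + 1) = 2 ^ (s * (t + c)) * 1 + gSum s t c := by
      rw [gSum_succ]; ring
    rw [h, tm_pow_mul_add _ _ _ (gSum_lt s t hs c), tm_one, ih]
    push_cast
    abel

lemma gSum_modeq (s t d : ℕ) (hd : 2 ^ s ≡ 1 [MOD d]) : ∀ c, gSum s t c ≡ c [MOD d] := by
  intro c
  induction c with
  | zero => rfl
  | succ c ih =>
    rw [gSum_succ]
    have h1 : (2:ℕ) ^ (s * (t + c)) = (2 ^ s) ^ (t + c) := by rw [← pow_mul]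
    have h2 : (2:ℕ) ^ (s * (t + c)) ≡ 1 [MOD d] := by
      rw [h1]
      calc (2 ^ s) ^ (t + c) ≡ 1 ^ (t + c) [MOD d] := hd.pow _
        _ = 1 := one_pow _
    simpa [add_comm] using h2.add ih

lemma gSum_ge (s t c : ℕ) (hc : 1 ≤ c) : 2 ^ (s * t) ≤ gSum s t c := by
  have h0 : 0 ∈ Finset.range c := Finset.mem_range.mpr (by omega)
  have := Finset.single_le_sum (f := fun i => 2 ^ (s * (t + i)))
    (fun i _ => Nat.zero_le _) h0
  simpa [gSum] using this

theorem stmt_14 (j k : ℕ) (hjk : j ≤ k) :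
    ¬ ∃ (c : Fin 2) (N : ℕ), ∀ u, N ≤ u → tm (3 ^ (k - j) * (3 * u + 2) - 1) = c := by
  rintro ⟨c, N, h⟩
  set m := k - j with hm
  set d : ℕ := 3 * 3 ^ m with hd
  set r : ℕ := 2 * 3 ^ m - 1 with hr
  have h3 : 1 ≤ 3 ^ m := Nat.one_le_pow _ _ (by norm_num)
  have hrd : r < d := by omega
  have hdpos : 0 < d := by omega
  have hdodd : Odd d := Odd.mul ⟨1, rfl⟩ (Odd.pow ⟨1, rfl⟩)
  have hd2 : d % 2 = 1 := Nat.odd_iff.mp hdodd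
  have hkey : ∀ u, 3 ^ m * (3 * u + 2) - 1 = d * u + r := by
    intro u
    have h1 : 3 ^ m * (3 * u + 2) = d * u + 2 * 3 ^ m := by rw [hd]; ring
    omega
  have hcop : Nat.Coprime 2 d := by
    rw [Nat.Coprime, Nat.gcd_rec, hd2, Nat.gcd_one_left]
  set s : ℕ := d.totient with hs
  have hs1 : 1 ≤ s := Nat.totient_pos.mpr hdpos
  have h2s : 2 ^ s ≡ 1 [MOD d] := Nat.ModEq.pow_totient hcop
  set t : ℕ := d * N + r with ht
  have main : ∀ cc : ℕ, 1 ≤ cc → cc % d = r → (cc : Fin 2) = c := by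
    intro cc hcc hccr
    have hmod : gSum s t cc % d = r := by
      have := gSum_modeq s t d h2s cc
      unfold Nat.ModEq at this
      omega
    obtain ⟨u, hgu⟩ : ∃ u, gSum s t cc = d * u + r :=
      ⟨gSum s t cc / d, by
        conv_lhs => rw [← Nat.div_add_mod (gSum s t cc) d]
        rw [hmod]⟩
    have hge : d * N + r < gSum s t cc := by
      have h1 : 2 ^ (s * t) ≤ gSum s t cc := gSum_ge s t cc hcc
      have h2 : t ≤ s * t := Nat.le_mul_of_pos_left t hs1
      have h3' : t < 2 ^ t := (Nat.lt_two_pow_self (n := t))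
      have h4 : (2:ℕ) ^ t ≤ 2 ^ (s * t) := Nat.pow_le_pow_right (by norm_num) h2
      omega
    have hNu : N ≤ u := by
      have hdu : d * N < d * u := by omega
      exact le_of_lt (Nat.lt_of_mul_lt_mul_left hdu)
    have := h u hNu
    rw [hkey u, ← hgu, tm_gSum s t hs1 cc] at this
    exact this
  have e0 : ((r : ℕ) : Fin 2) = c := main r (by omega) (Nat.mod_eq_of_lt hrd)
  have e1 : (((r + d : ℕ)) : Fin 2) = c := by
    apply main (r + d) (by omega)
    rw [Nat.add_mod_right, Nat.mod_eq_of_lt hrd]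
  have hdcast : ((d : ℕ) : Fin 2) = 1 := by
    obtain ⟨e, he⟩ := hdodd
    rw [he]
    push_cast
    rw [show ((2 * e : ℕ) : Fin 2) = 0 from Fin.ext (by simp [Fin.val_natCast]), zero_add]
  rw [Nat.cast_add, hdcast, e0] at e1
  have h10 : (1 : Fin 2) = 0 := add_eq_left.mp e1
  exact one_ne_zero h10
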